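/- Let m, q, p, n be natural numbers, H ∈ ℝ^{n×n} a symmetric positive semidefinite matrix, D ∈ ℝ^{m×m} and E ∈ ℝ^{p×p} symmetric negative definite matrices, G ∈ ℝ^{m×n}, Φ ∈ ℝ^{p×n}, and A ∈ ℝ^{q×n} a matrix of full row rank (rank A = q). Assume that the only vector x ∈ ℝⁿ with Hx = 0, Gx = 0 and Φx = 0 is x = 0. Then the symmetric block matrix J = [[D, 0, 0, −G], [0, 0, 0, A], [0, 0, E, −Φ], [−Gᵀ, Aᵀ, −Φᵀ, H]] of size (m + q + p + n) × (m + q + p + n) is nonsingular. -/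

import Mathlib

open Matrix

/-- Nonsingularity of the main diagonal block `J` of the KKT matrix
(abstract form of the paper's Lemma 1). -/
theorem kkt_diag_block_nonsingular
    (m q p n : ℕ)
    (H : Matrix (Fin n) (Fin n) ℝ) (hH : H.PosSemidef)
    (D : Matrix (Fin m) (Fin m) ℝ) (hD : (-D).PosDef)
    (E : Matrix (Fin p) (Fin p) ℝ) (hE : (-E).PosDef)
    (G : Matrix (Fin m) (Fin n) ℝ) (Φ : Matrix (Fin p) (Fin n) ℝ)
    (A : Matrix (Fin q) (Fin n) ℝ) (hA : A.rank = q)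
    (hker : ∀ x : Fin n → ℝ,
      H.mulVec x = 0 → G.mulVec x = 0 → Φ.mulVec x = 0 → x = 0) :
    IsUnit (Matrix.fromBlocks
      (Matrix.fromBlocks D 0 0 0) (Matrix.fromBlocks 0 (-G) 0 A)
      (Matrix.fromBlocks 0 0 (-Gᵀ) Aᵀ) (Matrix.fromBlocks E (-Φ) (-Φᵀ) H)) := by
  set J := Matrix.fromBlocks
      (Matrix.fromBlocks D 0 0 0) (Matrix.fromBlocks 0 (-G) 0 A)
      (Matrix.fromBlocks 0 0 (-Gᵀ) Aᵀ) (Matrix.fromBlocks E (-Φ) (-Φᵀ) H) with hJ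
  -- It suffices to show the kernel of J is trivial.
  have hkerJ : ∀ v : ((Fin m ⊕ Fin q) ⊕ (Fin p ⊕ Fin n)) → ℝ,
      J.mulVec v = 0 → v = 0 := by
    intro v hv
    set a : Fin m → ℝ := fun i => v (Sum.inl (Sum.inl i)) with ha_def
    set b : Fin q → ℝ := fun i => v (Sum.inl (Sum.inr i)) with hb_def
    set c : Fin p → ℝ := fun i => v (Sum.inr (Sum.inl i)) with hc_def
    set x : Fin n → ℝ := fun i => v (Sum.inr (Sum.inr i)) with hx_def
    have hv' : v = Sum.elim (Sum.elim a b) (Sum.elim c x) := by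
      funext s; rcases s with (i | i) | (i | i) <;> rfl
    rw [hv'] at hv
    rw [hJ, fromBlocks_mulVec] at hv
    simp only [Sum.elim_comp_inl, Sum.elim_comp_inr, fromBlocks_mulVec,
      zero_mulVec, add_zero, zero_add] at hv
    -- extract the four block equations
    have E1 : D *ᵥ a + (-G) *ᵥ x = 0 := by
      funext i
      have := congrFun hv (Sum.inl (Sum.inl i))
      simpa using this
    have E2 : A *ᵥ x = 0 := by
      funext i
      have := congrFun hv (Sum.inl (Sum.inr i))
      simpa using this
    have E3 : E *ᵥ c + (-Φ) *ᵥ x = 0 := by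
      funext i
      have := congrFun hv (Sum.inr (Sum.inl i))
      simpa using this
    have E4 : ((-Gᵀ) *ᵥ a + Aᵀ *ᵥ b) + ((-Φᵀ) *ᵥ c + H *ᵥ x) = 0 := by
      funext i
      have := congrFun hv (Sum.inr (Sum.inr i))
      simpa using this
    have hGx : G *ᵥ x = D *ᵥ a := by
      have := E1
      rw [neg_mulVec] at this
      linear_combination (norm := module) -this
    have hPx : Φ *ᵥ x = E *ᵥ c := by
      have := E3
      rw [neg_mulVec] at this
      linear_combination (norm := module) -this
    -- take the dot product of the fourth equation with x
    have key : a ⬝ᵥ ((-D) *ᵥ a) + c ⬝ᵥ ((-E) *ᵥ c) + x ⬝ᵥ (H *ᵥ x) = 0 := by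
      have h0 : x ⬝ᵥ (((-Gᵀ) *ᵥ a + Aᵀ *ᵥ b) + ((-Φᵀ) *ᵥ c + H *ᵥ x)) = 0 := by
        rw [E4, dotProduct_zero]
      have hG' : x ⬝ᵥ (Gᵀ *ᵥ a) = a ⬝ᵥ (D *ᵥ a) := by
        rw [dotProduct_mulVec, vecMul_transpose, hGx, dotProduct_comm]
      have hA' : x ⬝ᵥ (Aᵀ *ᵥ b) = 0 := by
        rw [dotProduct_mulVec, vecMul_transpose, E2, zero_dotProduct]
      have hP' : x ⬝ᵥ (Φᵀ *ᵥ c) = c ⬝ᵥ (E *ᵥ c) := by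
        rw [dotProduct_mulVec, vecMul_transpose, hPx, dotProduct_comm]
      simp only [dotProduct_add, neg_mulVec, dotProduct_neg] at h0
      simp only [neg_mulVec, dotProduct_neg]
      linarith [h0, hG', hA', hP']
    -- each of the three nonnegative terms must vanish
    have t1 : (0 : ℝ) ≤ a ⬝ᵥ ((-D) *ᵥ a) := by simpa using hD.posSemidef.dotProduct_mulVec_nonneg a
    have t2 : (0 : ℝ) ≤ c ⬝ᵥ ((-E) *ᵥ c) := by simpa using hE.posSemidef.dotProduct_mulVec_nonneg c
    have t3 : (0 : ℝ) ≤ x ⬝ᵥ (H *ᵥ x) := by simpa using hH.dotProduct_mulVec_nonneg x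
    have z1 : a ⬝ᵥ ((-D) *ᵥ a) = 0 := by linarith
    have z2 : c ⬝ᵥ ((-E) *ᵥ c) = 0 := by linarith
    have z3 : x ⬝ᵥ (H *ᵥ x) = 0 := by linarith
    have ha : a = 0 := by
      by_contra h
      have := hD.dotProduct_mulVec_pos h
      simp only [star_trivial] at this
      exact absurd z1 (ne_of_gt this)
    have hc : c = 0 := by
      by_contra h
      have := hE.dotProduct_mulVec_pos h
      simp only [star_trivial] at this
      exact absurd z2 (ne_of_gt this)
    have hHx : H *ᵥ x = 0 := by
      have := (hH.dotProduct_mulVec_zero_iff x).mp (by simpa using z3)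
      exact this
    have hGx0 : G *ᵥ x = 0 := by rw [hGx, ha, mulVec_zero]
    have hPx0 : Φ *ᵥ x = 0 := by rw [hPx, hc, mulVec_zero]
    have hx : x = 0 := hker x hHx hGx0 hPx0
    -- now the fourth equation gives Aᵀ b = 0, hence b = 0 by full row rank
    have hAb : Aᵀ *ᵥ b = 0 := by
      have := E4
      rw [ha, hc, hx] at this
      simpa using this
    have hli : LinearIndependent ℝ (fun i => A i) := by
      rw [linearIndependent_iff_card_eq_finrank_span]
      have h2 := A.rank_eq_finrank_span_row
      rw [hA] at h2
      simp only [Fintype.card_fin, Set.finrank]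
      exact h2
    have hinj : Function.Injective (Aᵀ.mulVec) := by
      rw [Matrix.mulVec_injective_iff]
      simp
      exact hli
    have hb : b = 0 := by
      apply hinj
      rw [hAb, mulVec_zero]
    funext s
    rcases s with (i | i) | (i | i)
    · exact congrFun ha i
    · exact congrFun hb i
    · exact congrFun hc i
    · exact congrFun hx i
  rw [← Matrix.mulVec_injective_iff_isUnit]
  intro u w huw
  have : J.mulVec (u - w) = 0 := by
    rw [mulVec_sub, huw, sub_self]
  have := hkerJ _ this
  exact sub_eq_zero.mp this
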